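/- Let f(t) = 2t - t^2, ε ∈ (0,1) with (1-ε)^2 > 1/2, and let (d_n) be a sequence in [0,1] with d_n > 0 for some n and d_{n+1} ≥ f((1-ε)^2 d_n) for all n ≥ N. Then liminf_{n→∞} d_n ≥ x_ε, where x_ε is the unique positive fixed point of t ↦ f((1-ε)^2 t). -/
import Mathlib


open Filter

set_option maxHeartbeats 1000000 in
/-- With f(t) = 2t - t² and (1-ε)² > 1/2, any sequence (d_n) in [0,1] with
d_N > 0 and d_{n+1} ≥ f((1-ε)²·d_n) for all n ≥ N has
liminf d_n ≥ x_ε = (2(1-ε)²-1)/(1-ε)⁴, the unique positive fixed point of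
t ↦ f((1-ε)²t). -/
theorem stmt_10 (f : ℝ → ℝ) (hf : ∀ t, f t = 2 * t - t ^ 2)
    (ε : ℝ) (hε : ε ∈ Set.Ioo (0 : ℝ) 1) (hsup : 1 / 2 < (1 - ε) ^ 2)
    (d : ℕ → ℝ) (hd : ∀ n, d n ∈ Set.Icc (0 : ℝ) 1) (N : ℕ)
    (hrec : ∀ n, N ≤ n → f ((1 - ε) ^ 2 * d n) ≤ d (n + 1))
    (hpos : 0 < d N) :
    (2 * (1 - ε) ^ 2 - 1) / (1 - ε) ^ 4 ≤ Filter.liminf d atTop := by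
  obtain ⟨hε0, hε1⟩ := hε
  set a : ℝ := (1 - ε) ^ 2 with ha_def
  have ha0 : 0 < a := by positivity
  have ha1 : a < 1 := by nlinarith
  have hah : 1 / 2 < a := hsup
  set x : ℝ := (2 * a - 1) / a ^ 2 with hx_def
  have hane : a ≠ 0 := ne_of_gt ha0
  have hax : a ^ 2 * x = 2 * a - 1 := by
    rw [hx_def]; field_simp
  have hx0 : 0 < x := by
    apply div_pos <;> nlinarith
  have hx1 : x ≤ 1 := by
    rw [div_le_one (by positivity)]; nlinarith
  have hbdd : IsBoundedUnder (· ≤ ·) atTop d :=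
    Filter.isBoundedUnder_of ⟨1, fun n => (hd n).2⟩
  have hbdd' : IsBoundedUnder (· ≥ ·) atTop d :=
    Filter.isBoundedUnder_of ⟨0, fun n => (hd n).1⟩
  have hcob : IsCoboundedUnder (· ≥ ·) atTop d := hbdd.isCoboundedUnder_ge
  set L := liminf d atTop with hL
  set c := min (d N) x with hc_def
  have hc0 : 0 < c := lt_min hpos hx0
  have hcx : c ≤ x := min_le_right _ _
  have hc1 : c ≤ 1 := hcx.trans hx1
  have hcx' : a ^ 2 * c ≤ 2 * a - 1 := by
    have := (le_div_iff₀ (show (0:ℝ) < a ^ 2 by positivity)).1 hcx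
    linarith
  have hstep : ∀ n, N ≤ n → c ≤ d n := by
    intro n hn
    induction n, hn using Nat.le_induction with
    | base => exact min_le_left _ _
    | succ n hn ih =>
      have h1 := hrec n hn
      rw [hf] at h1
      have h2 := (hd n).2
      have hfac : (0:ℝ) ≤ 2 * a - a ^ 2 * (d n + c) := by
        nlinarith [mul_nonneg (sq_nonneg a) (sub_nonneg.2 h2),
          mul_nonneg (sq_nonneg a) (sub_nonneg.2 hc1),
          mul_nonneg ha0.le (sub_nonneg.2 ha1.le)]
      nlinarith [mul_nonneg (sub_nonneg.2 ih) hfac,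
        mul_nonneg hc0.le (sub_nonneg.2 hcx')]
  have hcL : c ≤ L := le_liminf_of_le hcob (eventually_atTop.2 ⟨N, hstep⟩)
  have key : ∀ t, 0 ≤ t → t < L → 2 * (a * t) - (a * t) ^ 2 ≤ L := by
    intro t ht0 htL
    have hev : ∀ᶠ n in atTop, t < d n := eventually_lt_of_lt_liminf htL hbdd'
    obtain ⟨M, hM⟩ := eventually_atTop.1 hev
    apply le_liminf_of_le hcob
    rw [eventually_atTop]
    refine ⟨max M N + 1, fun m hm => ?_⟩
    obtain ⟨k, rfl⟩ : ∃ k, m = k + 1 := ⟨m - 1, by omega⟩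
    have hkN : N ≤ k := by omega
    have hkM : M ≤ k := by omega
    have h1 := hrec k hkN
    rw [hf] at h1
    have h2 := (hM k hkM).le
    have h3 := (hd k).2
    have ht1 : t ≤ 1 := h2.trans h3
    have hfac : (0:ℝ) ≤ 2 * a - a ^ 2 * (d k + t) := by
      nlinarith [mul_nonneg (sq_nonneg a) (sub_nonneg.2 h3),
        mul_nonneg (sq_nonneg a) (sub_nonneg.2 ht1),
        mul_nonneg ha0.le (sub_nonneg.2 ha1.le)]
    nlinarith [mul_nonneg (sub_nonneg.2 h2) hfac]
  have hgoal_eq : (2 * (1 - ε) ^ 2 - 1) / (1 - ε) ^ 4 = x := by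
    rw [hx_def, ha_def]; ring_nf
  rw [hgoal_eq]
  by_contra hcon
  push_neg at hcon
  have hLx : L < x := hcon
  have hLx' : a ^ 2 * L < 2 * a - 1 := by
    have h := (lt_div_iff₀ (show (0:ℝ) < a ^ 2 by positivity)).1 hLx
    linarith
  have hcL' : 0 < L := lt_of_lt_of_le hc0 hcL
  obtain ⟨η, hη_def, hη0⟩ : ∃ η : ℝ, η = (c / 2) * ((2 * a - 1) - a ^ 2 * L) ∧ 0 < η :=
    ⟨_, rfl, mul_pos (by linarith) (by linarith)⟩
  obtain ⟨t, ht_def⟩ : ∃ t : ℝ, t = max (c / 2) (L - η / 2) := ⟨_, rfl⟩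
  have h1 : c / 2 ≤ t := ht_def ▸ le_max_left _ _
  have h2 : L - η / 2 ≤ t := ht_def ▸ le_max_right _ _
  have ht0 : 0 ≤ t := (half_pos hc0).le.trans h1
  have htL : t < L := by rw [ht_def]; exact max_lt ((half_lt_self hc0).trans_le hcL) (sub_lt_self L (half_pos hη0))
  have hkey := key t ht0 htL
  have hmono : (c / 2) * ((2 * a - 1) - a ^ 2 * L) ≤ t * ((2 * a - 1) - a ^ 2 * t) := by
    have hta : a ^ 2 * t ≤ a ^ 2 * L := mul_le_mul_of_nonneg_left htL.le (sq_nonneg a)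
    exact mul_le_mul h1 (sub_le_sub_left hta _) (sub_nonneg.2 hLx'.le) ht0
  nlinarith [hmono, hkey, h2, hη0]
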